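/- arXiv:2211.16621 — 3 statements merged into one kernel-verified Lean document; each statement's English description precedes it below -/
import Mathlib

section
/- Let C be a strictly convex domain in the plane, and let H1 = x1 + λ1·C and H2 = x2 + λ2·C be two homothets of C (λ1, λ2 > 0) whose intersection has nonempty interior and is reduced (i.e., neither homothet contains the other intersected set). Then the intersection of the boundaries of H1 and H2 contains exactly two points. -/
open Pointwise
open scoped RealInnerProductSpace

abbrev Plane := EuclideanSpace ℝ (Fin 2)

/-- A convex domain: compact, convex, with nonempty interior. -/
def IsConvexDomain (C : Set Plane) : Prop :=
  IsCompact C ∧ Convex ℝ C ∧ (interior C).Nonempty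

/-- A strictly convex domain: a convex domain where the open segment between any two
distinct boundary points lies in the interior. -/
def IsStrictConvexDomain (C : Set Plane) : Prop :=
  IsConvexDomain C ∧
    ∀ x ∈ frontier C, ∀ y ∈ frontier C, x ≠ y → openSegment ℝ x y ⊆ interior C

/-- `u` is an outer unit normal of a supporting line of `C` at `x`. -/
def IsOuterNormalAt (C : Set Plane) (x u : Plane) : Prop :=
  ‖u‖ = 1 ∧ ∀ y ∈ C, (inner ℝ u y : ℝ) ≤ inner ℝ u x

/-- A singular boundary point: a boundary point admitting two distinct supporting lines
(equivalently, two distinct outer unit normals). -/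
def IsSingularPt (C : Set Plane) (x : Plane) : Prop :=
  x ∈ frontier C ∧ ∃ u v : Plane, u ≠ v ∧ IsOuterNormalAt C x u ∧ IsOuterNormalAt C x v

/-- Smooth: every boundary point has a unique outer unit normal (unique supporting line). -/
def IsSmoothDomain (C : Set Plane) : Prop :=
  ∀ x ∈ frontier C, ∃! u : Plane, IsOuterNormalAt C x u

open Set


noncomputable def sfn (A : Set Plane) (u : Plane) : ℝ := sSup ((fun z => ⟪u, z⟫) '' A)

lemma sfn_isGreatest {A : Set Plane} (hA : IsCompact A) (hne : A.Nonempty) (u : Plane) :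
    IsGreatest ((fun z => ⟪u, z⟫) '' A) (sfn A u) := by
  have hc : Continuous (fun z : Plane => ⟪u, z⟫) := (innerSL ℝ u).continuous
  have himg : IsCompact ((fun z => ⟪u, z⟫) '' A) := hA.image hc
  exact ⟨himg.sSup_mem (hne.image _), fun x hx => le_csSup himg.bddAbove hx⟩

lemma mem_homothet {C : Set Plane} {x z : Plane} {l : ℝ} :
    z ∈ x +ᵥ l • C ↔ ∃ c ∈ C, z = x + l • c := by
  constructor
  · rintro ⟨w, ⟨c, hc, rfl⟩, rfl⟩
    exact ⟨c, hc, rfl⟩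
  · rintro ⟨c, hc, rfl⟩
    exact ⟨l • c, ⟨c, hc, rfl⟩, rfl⟩

lemma inner_homothet {u x c : Plane} {l : ℝ} : ⟪u, x + l • c⟫ = ⟪u, x⟫ + l * ⟪u, c⟫ := by
  rw [inner_add_right, real_inner_smul_right]

lemma sfn_homothet {C : Set Plane} (hC : IsCompact C) (hne : C.Nonempty) (x : Plane) {l : ℝ}
    (hl : 0 < l) (u : Plane) : sfn (x +ᵥ l • C) u = ⟪u, x⟫ + l * sfn C u := by
  have hG := sfn_isGreatest hC hne u
  have key : IsGreatest ((fun z => ⟪u, z⟫) '' (x +ᵥ l • C)) (⟪u, x⟫ + l * sfn C u) := by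
    constructor
    · obtain ⟨⟨c, hc, hec⟩, -⟩ := hG
      refine ⟨x + l • c, mem_homothet.2 ⟨c, hc, rfl⟩, ?_⟩
      simp only [inner_homothet]
      simp only at hec
      rw [hec]
    · rintro r ⟨z, hz, rfl⟩
      obtain ⟨c, hc, rfl⟩ := mem_homothet.1 hz
      have h2 : ⟪u, c⟫ ≤ sfn C u := hG.2 ⟨c, hc, rfl⟩
      simp only [inner_homothet]
      nlinarith
  exact key.csSup_eq



lemma le_sfn {A : Set Plane} (hA : IsCompact A) (hne : A.Nonempty) {z : Plane} (hz : z ∈ A)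
    (u : Plane) : ⟪u, z⟫ ≤ sfn A u :=
  (sfn_isGreatest hA hne u).2 ⟨z, hz, rfl⟩

lemma sfn_le {A : Set Plane} (hA : IsCompact A) (hne : A.Nonempty) {u : Plane} {c : ℝ}
    (h : ∀ y ∈ A, ⟪u, y⟫ ≤ c) : sfn A u ≤ c := by
  obtain ⟨⟨z, hz, hez⟩, -⟩ := sfn_isGreatest hA hne u
  rw [← hez]; exact h z hz

lemma sfn_exists {A : Set Plane} (hA : IsCompact A) (hne : A.Nonempty) (u : Plane) :
    ∃ z ∈ A, sfn A u = ⟪u, z⟫ := by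
  obtain ⟨⟨z, hz, hez⟩, -⟩ := sfn_isGreatest hA hne u
  exact ⟨z, hz, hez.symm⟩



-- homothet as image of an affine homeomorphism
lemma homothet_eq_image {C : Set Plane} {x : Plane} {l : ℝ} :
    x +ᵥ l • C = (fun c => x + l • c) '' C := by
  ext z
  constructor
  · rintro ⟨w, ⟨c, hc, rfl⟩, rfl⟩; exact ⟨c, hc, rfl⟩
  · rintro ⟨c, hc, rfl⟩; exact ⟨l • c, ⟨c, hc, rfl⟩, rfl⟩

noncomputable def homothetHomeo (x : Plane) {l : ℝ} (hl : l ≠ 0) : Plane ≃ₜ Plane :=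
  (Homeomorph.smulOfNeZero l hl).trans (Homeomorph.addLeft x)

lemma homothetHomeo_apply (x : Plane) {l : ℝ} (hl : l ≠ 0) (c : Plane) :
    homothetHomeo x hl c = x + l • c := rfl

lemma interior_homothet {C : Set Plane} {x : Plane} {l : ℝ} (hl : 0 < l) :
    interior (x +ᵥ l • C) = x +ᵥ l • interior C := by
  rw [homothet_eq_image, homothet_eq_image]
  exact ((homothetHomeo x hl.ne').image_interior C).symm

lemma frontier_homothet {C : Set Plane} {x : Plane} {l : ℝ} (hl : 0 < l) :
    frontier (x +ᵥ l • C) = x +ᵥ l • frontier C := by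
  rw [homothet_eq_image, homothet_eq_image]
  exact ((homothetHomeo x hl.ne').image_frontier C).symm

lemma isCompact_homothet {C : Set Plane} (hC : IsCompact C) {x : Plane} {l : ℝ} :
    IsCompact (x +ᵥ l • C) := by
  rw [homothet_eq_image]
  exact hC.image (continuous_const.add (continuous_const_smul l))

lemma convex_homothet {C : Set Plane} (hC : Convex ℝ C) {x : Plane} {l : ℝ} :
    Convex ℝ (x +ᵥ l • C) := (hC.smul l).vadd x



lemma inner_lt_of_interior {K : Set Plane} {p w : Plane} {c : ℝ} (hw : w ≠ 0)
    (hp : p ∈ interior K) (hbd : ∀ y ∈ K, ⟪w, y⟫ ≤ c) : ⟪w, p⟫ < c := by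
  obtain ⟨ε, hε, hball⟩ := Metric.mem_nhds_iff.1 (mem_interior_iff_mem_nhds.1 hp)
  have hwpos : (0:ℝ) < ‖w‖ := norm_pos_iff.2 hw
  have hδ : (0:ℝ) < ε / (2 * ‖w‖) := by positivity
  have hmem : p + (ε / (2 * ‖w‖)) • w ∈ K := by
    apply hball
    simp only [Metric.mem_ball, dist_self_add_left]
    rw [norm_smul, Real.norm_eq_abs, abs_of_pos hδ]
    calc ε / (2 * ‖w‖) * ‖w‖ = ε / 2 := by field_simp
    _ < ε := by linarith
  have h1 := hbd _ hmem
  rw [inner_add_right, real_inner_smul_right, real_inner_self_eq_norm_sq] at h1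
  nlinarith [mul_pos hδ (pow_pos hwpos 2)]

lemma exists_unit_normal {A : Set Plane} (hconv : Convex ℝ A) (hcl : IsClosed A)
    (hint : (interior A).Nonempty) {z : Plane} (hz : z ∈ frontier A) :
    ∃ u : Plane, ‖u‖ = 1 ∧ ∀ y ∈ A, ⟪u, y⟫ ≤ ⟪u, z⟫ := by
  have hznotint : z ∉ interior A := by
    rw [frontier, hcl.closure_eq] at hz; exact hz.2
  obtain ⟨f, hf⟩ := geometric_hahn_banach_open_point hconv.interior isOpen_interior hznotint
  obtain ⟨p, hp⟩ := hint
  have hfle : ∀ y ∈ A, f y ≤ f z := by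
    intro y hy
    by_contra hgt
    push_neg at hgt
    have hmem : ∀ t : ℝ, 0 < t → t ≤ 1 → y + t • (p - y) ∈ interior A := by
      intro t ht ht1
      have := hconv.combo_interior_closure_subset_interior (a := t) (b := 1 - t)
        ht (by linarith) (by ring)
      apply this
      refine ⟨t • p, smul_mem_smul_set hp, (1 - t) • y, smul_mem_smul_set ?_, by module⟩
      exact subset_closure hy
    have hft : ∀ t : ℝ, 0 < t → t ≤ 1 → f y + t * (f p - f y) < f z := by
      intro t ht ht1
      have := hf _ (hmem t ht ht1)
      have heq : f (y + t • (p - y)) = f y + t * (f p - f y) := by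
        rw [map_add, map_smul, map_sub]; simp; try ring
      linarith [heq ▸ this]
    rcases le_or_gt (f y) (f p) with hc | hc
    · have := hft 1 one_pos le_rfl
      linarith
    · set t : ℝ := min 1 ((f y - f z) / (2 * (f y - f p))) with ht
      have h1 : (0:ℝ) < (f y - f z) / (2 * (f y - f p)) := by
        apply div_pos <;> linarith
      have h2 := hft t (lt_min one_pos h1) (min_le_left _ _)
      have h3 : t * (2 * (f y - f p)) ≤ f y - f z := by
        have hm := min_le_right 1 ((f y - f z) / (2 * (f y - f p)))
        exact (le_div_iff₀ (by linarith)).1 hm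
      have htpos : 0 < t := lt_min one_pos h1
      nlinarith
  have hfne : f ≠ 0 := by
    intro h0
    have := hf p hp
    rw [h0] at this
    simp at this
  set u0 : Plane := (InnerProductSpace.toDual ℝ Plane).symm f with hu0
  have hu0app : ∀ y : Plane, ⟪u0, y⟫ = f y := fun y =>
    InnerProductSpace.toDual_symm_apply
  have hu0ne : u0 ≠ 0 := by
    intro h
    apply hfne
    ext y
    have := hu0app y
    rw [h] at this
    simpa using this.symm
  refine ⟨‖u0‖⁻¹ • u0, ?_, ?_⟩
  · rw [norm_smul, norm_inv, norm_norm, inv_mul_cancel₀ (norm_ne_zero_iff.2 hu0ne)]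
  · intro y hy
    rw [real_inner_smul_left, real_inner_smul_left, hu0app, hu0app]
    have : f y ≤ f z := hfle y hy
    have hpos : (0:ℝ) < ‖u0‖⁻¹ := inv_pos.2 (norm_pos_iff.2 hu0ne)
    exact mul_le_mul_of_nonneg_left this hpos.le


-- no antipodal pair of "nonpositive" directions for a set with nonempty interior
lemma no_antipodal {B : Set Plane} (hint : (interior B).Nonempty) {u : Plane} (hu : u ≠ 0)
    (h1 : ∀ x ∈ B, ⟪u, x⟫ ≤ 0) (h2 : ∀ x ∈ B, ⟪-u, x⟫ ≤ 0) : False := by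
  obtain ⟨p, hp⟩ := hint
  have a1 := inner_lt_of_interior hu hp h1
  have a2 := inner_lt_of_interior (neg_ne_zero.2 hu) hp h2
  rw [inner_neg_left] at a2
  linarith

lemma unit_opp {u v : Plane} (hu : ‖u‖ = 1) (hv : ‖v‖ = 1) {a b : ℝ}
    (h : a • u + b • v = 0) (ha : a ≠ 0) : v = u ∨ v = -u := by
  have hb : b ≠ 0 := by
    rintro rfl
    rw [zero_smul, add_zero] at h
    have := smul_eq_zero.1 h
    rcases this with h' | h'
    · exact ha h'
    · rw [h'] at hu; simp at hu
  have hveq : v = (-a / b) • u := by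
    have : b • v = -(a • u) := by
      rw [eq_neg_iff_add_eq_zero, add_comm]; exact h
    have hv2 : v = b⁻¹ • (-(a • u)) := by
      rw [← this, smul_smul, inv_mul_cancel₀ hb, one_smul]
    rw [hv2]; rw [div_eq_mul_inv]; module
  have : |(-a / b)| = 1 := by
    have := congrArg norm hveq
    rw [norm_smul, hu, hv, Real.norm_eq_abs, mul_one] at this
    exact this.symm
  rcases abs_eq (by norm_num : (0:ℝ) ≤ 1) |>.1 this with h' | h'
  · left; rw [hveq, h', one_smul]
  · right; rw [hveq, h', neg_one_smul]

lemma lin_dep3 (u v w : Plane) :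
    ∃ g : Fin 3 → ℝ, g 0 • u + g 1 • v + g 2 • w = 0 ∧ (g 0 ≠ 0 ∨ g 1 ≠ 0 ∨ g 2 ≠ 0) := by
  have hnli : ¬ LinearIndependent ℝ ![u, v, w] := by
    intro h
    have := h.fintype_card_le_finrank
    rw [finrank_euclideanSpace_fin] at this
    simp at this
  rw [Fintype.not_linearIndependent_iff] at hnli
  obtain ⟨g, hg, i, hi⟩ := hnli
  refine ⟨g, ?_, ?_⟩
  · rw [Fin.sum_univ_three] at hg
    simpa using hg
  · fin_cases i
    · exact Or.inl hi
    · exact Or.inr (Or.inl hi)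
    · exact Or.inr (Or.inr hi)

lemma perp_two {u v x : Plane} (hu : ‖u‖ = 1) (hv : ‖v‖ = 1) (hvu : v ≠ u) (hvu' : v ≠ -u)
    (h1 : ⟪u, x⟫ = 0) (h2 : ⟪v, x⟫ = 0) : x = 0 := by
  by_contra hx
  obtain ⟨g, hg, hne⟩ := lin_dep3 u v x
  have hg2 : g 2 = 0 := by
    have := congrArg (fun z => ⟪x, z⟫) hg
    simp only [inner_add_right, real_inner_smul_right, inner_zero_right] at this
    rw [real_inner_comm] at h1 h2
    rw [h1, h2, real_inner_self_eq_norm_sq] at this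
    have hxn : (0:ℝ) < ‖x‖ ^ 2 := by
      have : (0:ℝ) < ‖x‖ := norm_pos_iff.2 hx
      positivity
    rcases mul_eq_zero.1 (by linarith : g 2 * ‖x‖ ^ 2 = 0) with h' | h'
    · exact h'
    · linarith
  rw [hg2, zero_smul, add_zero] at hg
  rcases em (g 0 = 0) with h0 | h0
  · rw [h0, zero_smul, zero_add] at hg
    have hg1 : g 1 ≠ 0 := by tauto
    rcases smul_eq_zero.1 hg with h' | h'
    · exact hg1 h'
    · rw [h'] at hv; simp at hv
  · rcases unit_opp hu hv hg h0 with h' | h' <;> [exact hvu h'; exact hvu' h']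


section Core
variable {B : Set Plane}

lemma unit_ne_zero {u : Plane} (hu : ‖u‖ = 1) : u ≠ 0 := by
  intro h; rw [h] at hu; simp at hu

-- strict: positive combination of two nonparallel nonpositive directions is strictly negative
lemma core_strict (hB : IsCompact B) (hne : B.Nonempty) (h0 : (0:Plane) ∉ B)
    {u v : Plane} (hu : ‖u‖ = 1) (hv : ‖v‖ = 1) (hvu : v ≠ u) (hvu' : v ≠ -u)
    (hun : ∀ x ∈ B, ⟪u, x⟫ ≤ 0) (hvn : ∀ x ∈ B, ⟪v, x⟫ ≤ 0)
    {a b : ℝ} (ha : 0 < a) (hb : 0 < b) : sfn B (a • u + b • v) < 0 := by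
  obtain ⟨z, hz, hez⟩ := sfn_exists hB hne (a • u + b • v)
  rw [hez, inner_add_left, real_inner_smul_left, real_inner_smul_left]
  have h1 := hun z hz
  have h2 := hvn z hz
  rcases lt_or_eq_of_le h1 with h1' | h1'
  · nlinarith
  · rcases lt_or_eq_of_le h2 with h2' | h2'
    · nlinarith
    · exfalso
      exact h0 ((perp_two hu hv hvu hvu' h1' h2') ▸ hz)

lemma core_aux (hB : IsCompact B) (hint : (interior B).Nonempty) (h0 : (0:Plane) ∉ B)
    {u v w : Plane} (hu : ‖u‖ = 1) (hv : ‖v‖ = 1) (hw : ‖w‖ = 1)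
    (hvu : v ≠ u) (hvu' : v ≠ -u)
    (hsu : sfn B u = 0) (hsv : sfn B v = 0) (hsw : sfn B w = 0)
    {a b c : ℝ} (ha : 0 < a) (hb : 0 < b) (hc : c ≠ 0)
    (hsum : a • u + b • v + c • w = 0) : False := by
  have hne : B.Nonempty := hint.mono interior_subset |>.mono (subset_refl _) -- fix
  have hun : ∀ x ∈ B, ⟪u, x⟫ ≤ 0 := fun x hx => hsu ▸ le_sfn hB hne hx u
  have hvn : ∀ x ∈ B, ⟪v, x⟫ ≤ 0 := fun x hx => hsv ▸ le_sfn hB hne hx v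
  have hwn : ∀ x ∈ B, ⟪w, x⟫ ≤ 0 := fun x hx => hsw ▸ le_sfn hB hne hx w
  rcases lt_or_gt_of_ne hc with hcneg | hcpos
  · -- w is a positive combination of u, v
    have hweq : w = (a / (-c)) • u + (b / (-c)) • v := by
      have hcne : (-c) ≠ 0 := neg_ne_zero.2 hc
      have : (-c) • w = a • u + b • v := by
        have hid : (-c) • w - (a • u + b • v) = -(a • u + b • v + c • w) := by module
        have := sub_eq_zero.1 (by rw [hid, hsum, neg_zero])
        exact this
      have := congrArg (fun z => (-c)⁻¹ • z) this
      simp only [smul_smul, inv_mul_cancel₀ hcne, one_smul, smul_add] at this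
      rw [this]
      rw [div_eq_inv_mul, div_eq_inv_mul, mul_smul, mul_smul]
    have hstrict := core_strict (a := a / -c) (b := b / -c) hB hne h0 hu hv hvu hvu'
      hun hvn (div_pos ha (neg_pos.2 hcneg)) (div_pos hb (neg_pos.2 hcneg))
    rw [← hweq] at hstrict
    rw [hsw] at hstrict
    exact lt_irrefl 0 hstrict
  · -- -u is a nonneg combination of v, w : antipodal contradiction
    have hnegu : ∀ x ∈ B, ⟪-u, x⟫ ≤ 0 := by
      intro x hx
      have heq : -u = (b / a) • v + (c / a) • w := by
        have : a • (-u) = b • v + c • w := by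
          have hid : a • (-u) - (b • v + c • w) = -(a • u + b • v + c • w) := by module
          exact sub_eq_zero.1 (by rw [hid, hsum, neg_zero])
        have := congrArg (fun z => a⁻¹ • z) this
        simp only [smul_smul, inv_mul_cancel₀ ha.ne', one_smul, smul_add] at this
        rw [this, div_eq_inv_mul, div_eq_inv_mul, mul_smul, mul_smul]
      rw [heq, inner_add_left, real_inner_smul_left, real_inner_smul_left]
      have := hvn x hx
      have := hwn x hx
      have hba : 0 ≤ b / a := le_of_lt (div_pos hb ha)
      have hca : 0 ≤ c / a := le_of_lt (div_pos hcpos ha)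
      nlinarith
    exact no_antipodal hint (unit_ne_zero hu) hun hnegu

lemma core (hB : IsCompact B) (hint : (interior B).Nonempty) (h0 : (0:Plane) ∉ B)
    {w1 w2 w3 : Plane} (h1 : ‖w1‖ = 1) (h2 : ‖w2‖ = 1) (h3 : ‖w3‖ = 1)
    (hs1 : sfn B w1 = 0) (hs2 : sfn B w2 = 0) (hs3 : sfn B w3 = 0) :
    w1 = w2 ∨ w1 = w3 ∨ w2 = w3 := by
  by_contra hcon
  push_neg at hcon
  obtain ⟨h12, h13, h23⟩ := hcon
  have hne : B.Nonempty := hint.mono interior_subset |>.mono (subset_refl _)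
  have hnn : ∀ z : Plane, ‖z‖ = 1 → sfn B z = 0 → ∀ x ∈ B, ⟪z, x⟫ ≤ 0 :=
    fun z hz hsz x hx => hsz ▸ le_sfn hB hne hx z
  -- pairwise non-antipodal
  have hanti : ∀ z z' : Plane, ‖z‖ = 1 → ‖z'‖ = 1 → sfn B z = 0 → sfn B z' = 0 → z' ≠ -z := by
    intro z z' hz hz' hsz hsz' heq
    refine no_antipodal hint (unit_ne_zero hz) (hnn z hz hsz) ?_
    intro x hx
    exact heq ▸ hnn z' hz' hsz' x hx
  have a12 := hanti w1 w2 h1 h2 hs1 hs2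
  have a13 := hanti w1 w3 h1 h3 hs1 hs3
  have a21 := hanti w2 w1 h2 h1 hs2 hs1
  have a23 := hanti w2 w3 h2 h3 hs2 hs3
  have a31 := hanti w3 w1 h3 h1 hs3 hs1
  have a32 := hanti w3 w2 h3 h2 hs3 hs2
  obtain ⟨g, hg, hgne⟩ := lin_dep3 w1 w2 w3
  -- first dispatch cases where some coefficient vanishes
  rcases em (g 0 = 0) with hg0 | hg0
  · rw [hg0, zero_smul, zero_add] at hg
    rcases em (g 1 = 0) with hg1 | hg1
    · rw [hg1, zero_smul, zero_add] at hg
      have hg2 : g 2 ≠ 0 := by tauto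
      rcases smul_eq_zero.1 hg with h' | h'
      · exact hg2 h'
      · exact unit_ne_zero h3 h'
    · rcases unit_opp h2 h3 hg hg1 with h' | h'
      · exact h23 h'.symm
      · exact a23 h'
  rcases em (g 1 = 0) with hg1 | hg1
  · rw [hg1, zero_smul, add_zero] at hg
    rcases unit_opp h1 h3 hg hg0 with h' | h'
    · exact h13 h'.symm
    · exact a13 h'
  rcases em (g 2 = 0) with hg2 | hg2
  · rw [hg2, zero_smul, add_zero] at hg
    rcases unit_opp h1 h2 hg hg0 with h' | h'
    · exact h12 h'.symm
    · exact a12 h'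
  -- all coefficients nonzero: find two of the same sign
  have hneg : (-(g 0)) • w1 + (-(g 1)) • w2 + (-(g 2)) • w3 = 0 := by
    have hid : (-(g 0)) • w1 + (-(g 1)) • w2 + (-(g 2)) • w3
        = -(g 0 • w1 + g 1 • w2 + g 2 • w3) := by module
    rw [hid, hg, neg_zero]
  have hsum120 : g 0 • w1 + g 1 • w2 + g 2 • w3 = 0 := hg
  have hsum132 : g 0 • w1 + g 2 • w3 + g 1 • w2 = 0 := by
    have hid : g 0 • w1 + g 2 • w3 + g 1 • w2 = g 0 • w1 + g 1 • w2 + g 2 • w3 := by module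
    rw [hid, hg]
  have hsum231 : g 1 • w2 + g 2 • w3 + g 0 • w1 = 0 := by
    have hid : g 1 • w2 + g 2 • w3 + g 0 • w1 = g 0 • w1 + g 1 • w2 + g 2 • w3 := by module
    rw [hid, hg]
  have hneg132 : (-(g 0)) • w1 + (-(g 2)) • w3 + (-(g 1)) • w2 = 0 := by
    have hid : (-(g 0)) • w1 + (-(g 2)) • w3 + (-(g 1)) • w2
        = -(g 0 • w1 + g 1 • w2 + g 2 • w3) := by module
    rw [hid, hg, neg_zero]
  have hneg231 : (-(g 1)) • w2 + (-(g 2)) • w3 + (-(g 0)) • w1 = 0 := by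
    have hid : (-(g 1)) • w2 + (-(g 2)) • w3 + (-(g 0)) • w1
        = -(g 0 • w1 + g 1 • w2 + g 2 • w3) := by module
    rw [hid, hg, neg_zero]
  rcases lt_or_gt_of_ne hg0 with s0 | s0 <;> rcases lt_or_gt_of_ne hg1 with s1 | s1 <;>
    rcases lt_or_gt_of_ne hg2 with s2 | s2
  · exact core_aux hB hint h0 h1 h2 h3 h12.symm a12 hs1 hs2 hs3
      (by linarith : (0:ℝ) < -(g 0)) (by linarith : (0:ℝ) < -(g 1)) (by simpa using hg2) hneg
  · exact core_aux hB hint h0 h1 h2 h3 h12.symm a12 hs1 hs2 hs3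
      (by linarith : (0:ℝ) < -(g 0)) (by linarith : (0:ℝ) < -(g 1)) (by simpa using hg2) hneg
  · exact core_aux hB hint h0 h1 h3 h2 h13.symm a13 hs1 hs3 hs2
      (by linarith : (0:ℝ) < -(g 0)) (by linarith : (0:ℝ) < -(g 2)) (by simpa using hg1) hneg132
  · exact core_aux hB hint h0 h2 h3 h1 h23.symm a23 hs2 hs3 hs1
      (by linarith : (0:ℝ) < g 1) (by linarith : (0:ℝ) < g 2) hg0 hsum231
  · exact core_aux hB hint h0 h2 h3 h1 h23.symm a23 hs2 hs3 hs1
      (by linarith : (0:ℝ) < -(g 1)) (by linarith : (0:ℝ) < -(g 2)) (by simpa using hg0) hneg231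
  · exact core_aux hB hint h0 h1 h3 h2 h13.symm a13 hs1 hs3 hs2
      (by linarith : (0:ℝ) < g 0) (by linarith : (0:ℝ) < g 2) hg1 hsum132
  · exact core_aux hB hint h0 h1 h2 h3 h12.symm a12 hs1 hs2 hs3
      (by linarith : (0:ℝ) < g 0) (by linarith : (0:ℝ) < g 1) hg2 hsum120
  · exact core_aux hB hint h0 h1 h2 h3 h12.symm a12 hs1 hs2 hs3
      (by linarith : (0:ℝ) < g 0) (by linarith : (0:ℝ) < g 1) hg2 hsum120
end Core


lemma sfn_continuous {A : Set Plane} (hA : IsCompact A) (hne : A.Nonempty) :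
    Continuous (sfn A) := by
  obtain ⟨r, hr⟩ := hA.isBounded.subset_closedBall 0
  have hr0 : 0 ≤ r := by
    obtain ⟨z, hz⟩ := hne
    have := hr hz
    simp only [Metric.mem_closedBall, dist_zero_right] at this
    exact le_trans (norm_nonneg z) this
  have key : ∀ u u' : Plane, sfn A u ≤ sfn A u' + r * ‖u - u'‖ := by
    intro u u'
    obtain ⟨z, hz, hez⟩ := sfn_exists hA hne u
    have hzr : ‖z‖ ≤ r := by
      have := hr hz
      simpa [Metric.mem_closedBall, dist_zero_right] using this
    have h1 : ⟪u, z⟫ = ⟪u', z⟫ + ⟪u - u', z⟫ := by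
      rw [inner_sub_left]; ring
    have h2 : ⟪u - u', z⟫ ≤ ‖u - u'‖ * ‖z‖ := real_inner_le_norm _ _
    have h3 : ⟪u', z⟫ ≤ sfn A u' := le_sfn hA hne hz u'
    have h4 : ‖u - u'‖ * ‖z‖ ≤ r * ‖u - u'‖ := by
      rw [mul_comm]
      exact mul_le_mul_of_nonneg_right hzr (norm_nonneg _)
    linarith [hez ▸ (h1.le.trans (by linarith) : ⟪u, z⟫ ≤ sfn A u' + r * ‖u - u'‖)]
  have hlip : LipschitzWith r.toNNReal (sfn A) := by
    apply LipschitzWith.of_dist_le_mul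
    intro u u'
    rw [Real.dist_eq, abs_sub_le_iff]
    constructor
    · have := key u u'
      rw [dist_eq_norm]
      simp only [Real.coe_toNNReal r hr0]
      linarith
    · have := key u' u
      rw [dist_eq_norm, norm_sub_rev]
      simp only [Real.coe_toNNReal r hr0]
      linarith
  exact hlip.continuous

lemma subset_of_sfn_le {A B : Set Plane} (hA : IsCompact A) (hneA : A.Nonempty)
    (hB : IsCompact B) (hneB : B.Nonempty) (hBc : Convex ℝ B)
    (h : ∀ u : Plane, sfn A u ≤ sfn B u) : A ⊆ B := by
  intro z hz
  by_contra hzB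
  obtain ⟨f, c, hfB, hfz⟩ := geometric_hahn_banach_closed_point hBc hB.isClosed hzB
  set u : Plane := (InnerProductSpace.toDual ℝ Plane).symm f with hu
  have huapp : ∀ y : Plane, ⟪u, y⟫ = f y := fun y => InnerProductSpace.toDual_symm_apply
  have h1 : sfn B u ≤ c := sfn_le hB hneB (fun y hy => (huapp y) ▸ (hfB y hy).le)
  have h2 : c < ⟪u, z⟫ := by rw [huapp]; exact hfz
  have h3 : ⟪u, z⟫ ≤ sfn A u := le_sfn hA hneA hz u
  linarith [h u]



noncomputable def edir (θ : ℝ) : Plane :=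
  Real.cos θ • EuclideanSpace.single (0 : Fin 2) (1:ℝ) +
  Real.sin θ • EuclideanSpace.single (1 : Fin 2) (1:ℝ)

lemma edir_apply0 (θ : ℝ) : edir θ 0 = Real.cos θ := by
  simp [edir, EuclideanSpace.single_apply]

lemma edir_apply1 (θ : ℝ) : edir θ 1 = Real.sin θ := by
  simp [edir, EuclideanSpace.single_apply]

lemma coords_eq {w : Plane} : ∀ i : Fin 2, i = 0 ∨ i = 1 := by decide

lemma edir_norm (θ : ℝ) : ‖edir θ‖ = 1 := by
  have h : ‖edir θ‖ = Real.sqrt (∑ i : Fin 2, ‖edir θ i‖ ^ 2) := by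
    rw [EuclideanSpace.norm_eq]
  rw [h, Fin.sum_univ_two, edir_apply0, edir_apply1]
  rw [Real.norm_eq_abs, Real.norm_eq_abs, sq_abs, sq_abs]
  rw [show Real.cos θ ^ 2 + Real.sin θ ^ 2 = 1 from by
    rw [← Real.sin_sq_add_cos_sq θ]; ring]
  exact Real.sqrt_one

lemma edir_surj {w : Plane} (hw : ‖w‖ = 1) : ∃ θ : ℝ, edir θ = w := by
  set zc : ℂ := Complex.mk (w 0) (w 1) with hz
  have habs : ‖zc‖ = 1 := by
    rw [Complex.norm_def, Complex.normSq_mk]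
    have : ‖w‖ = Real.sqrt (∑ i : Fin 2, ‖w i‖ ^ 2) := by rw [EuclideanSpace.norm_eq]
    rw [hw] at this
    rw [Fin.sum_univ_two, Real.norm_eq_abs, Real.norm_eq_abs, sq_abs, sq_abs] at this
    rw [show w 0 * w 0 + w 1 * w 1 = w 0 ^ 2 + w 1 ^ 2 by ring]
    exact this.symm
  have hzne : zc ≠ 0 := by
    intro h
    rw [h] at habs
    simp at habs
  refine ⟨Complex.arg zc, ?_⟩
  have hcos : Real.cos (Complex.arg zc) = w 0 := by
    rw [Complex.cos_arg hzne, habs]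
    simp [hz]
  have hsin : Real.sin (Complex.arg zc) = w 1 := by
    rw [Complex.sin_arg, habs]
    simp [hz]
  ext i
  rcases coords_eq (w := w) i with rfl | rfl
  · rw [edir_apply0, hcos]
  · rw [edir_apply1, hsin]

lemma edir_inj {θ ψ : ℝ} (h : edir θ = edir ψ) : ∃ k : ℤ, θ - ψ = 2 * Real.pi * k := by
  have hc : Real.cos θ = Real.cos ψ := by
    have : edir θ 0 = edir ψ 0 := by rw [h]
    rwa [edir_apply0, edir_apply0] at this
  have hs : Real.sin θ = Real.sin ψ := by
    have : edir θ 1 = edir ψ 1 := by rw [h]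
    rwa [edir_apply1, edir_apply1] at this
  exact Real.Angle.angle_eq_iff_two_pi_dvd_sub.1 (Real.Angle.cos_sin_inj hc hs)

lemma edir_periodic (θ : ℝ) (k : ℤ) : edir (θ + k • (2 * Real.pi)) = edir θ := by
  have : (k • (2 * Real.pi) : ℝ) = (k : ℝ) * (2 * Real.pi) := by
    rw [zsmul_eq_mul]
  rw [this]
  unfold edir
  rw [Real.cos_add_int_mul_two_pi, Real.sin_add_int_mul_two_pi]

lemma edir_continuous : Continuous edir := by
  exact (Real.continuous_cos.smul continuous_const).add
    (Real.continuous_sin.smul continuous_const)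

lemma unit_smul_eq {u v : Plane} (hu : ‖u‖ = 1) (hv : ‖v‖ = 1) {c : ℝ} (hc : 0 < c)
    (h : u = c • v) : u = v := by
  have := congrArg norm h
  rw [hu, norm_smul, hv, Real.norm_eq_abs, mul_one, abs_of_pos hc] at this
  rw [h, ← this, one_smul]


section Body
variable {A : Set Plane} {o : Plane}

lemma mem_vadd_iff {x z : Plane} {A : Set Plane} : z ∈ x +ᵥ A ↔ z - x ∈ A := by
  constructor
  · rintro ⟨a, ha, rfl⟩
    simpa using ha
  · intro h
    exact ⟨z - x, h, by simp⟩

lemma vadd_eq_image (x : Plane) (A : Set Plane) : x +ᵥ A = (fun z => x + z) '' A := by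
  ext z
  rw [mem_vadd_iff]
  constructor
  · intro h; exact ⟨z - x, h, by simp⟩
  · rintro ⟨a, ha, rfl⟩; simpa using ha

lemma interior_vadd' (x : Plane) (A : Set Plane) : interior (x +ᵥ A) = x +ᵥ interior A := by
  rw [vadd_eq_image, vadd_eq_image]
  exact ((Homeomorph.addLeft x).image_interior A).symm

lemma frontier_vadd' (x : Plane) (A : Set Plane) : frontier (x +ᵥ A) = x +ᵥ frontier A := by
  rw [vadd_eq_image, vadd_eq_image]
  exact ((Homeomorph.addLeft x).image_frontier A).symm

-- the translate of A taking o to 0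
lemma Dof_nhds (ho : o ∈ interior A) : (-o) +ᵥ A ∈ nhds (0 : Plane) := by
  rw [mem_nhds_iff]
  exact ⟨interior ((-o) +ᵥ A), interior_subset, isOpen_interior, by
    rw [interior_vadd', mem_vadd_iff]; simpa using ho⟩

lemma Dof_convex (hA : Convex ℝ A) : Convex ℝ ((-o) +ᵥ A) := hA.vadd _

lemma body_le_one_iff (hA : Convex ℝ A) (hcl : IsClosed A) (ho : o ∈ interior A) (z : Plane) :
    gauge ((-o) +ᵥ A) (z - o) ≤ 1 ↔ z ∈ A := by
  rw [gauge_le_one_iff_mem_closure (Dof_convex hA) (Dof_nhds ho)]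
  have hcl' : IsClosed ((-o) +ᵥ A) := by
    rw [vadd_eq_image]
    exact (Homeomorph.addLeft (-o)).isClosedMap A hcl
  rw [hcl'.closure_eq, mem_vadd_iff]
  constructor
  · intro h; simpa using h
  · intro h; simpa using h

lemma body_lt_one_iff (hA : Convex ℝ A) (ho : o ∈ interior A) (z : Plane) :
    gauge ((-o) +ᵥ A) (z - o) < 1 ↔ z ∈ interior A := by
  rw [gauge_lt_one_iff_mem_interior (Dof_convex hA) (Dof_nhds ho), interior_vadd', mem_vadd_iff]
  constructor
  · intro h; simpa using h
  · intro h; simpa using h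

lemma body_eq_one_iff (hA : Convex ℝ A) (ho : o ∈ interior A) (z : Plane) :
    gauge ((-o) +ᵥ A) (z - o) = 1 ↔ z ∈ frontier A := by
  rw [gauge_eq_one_iff_mem_frontier (Dof_convex hA) (Dof_nhds ho), frontier_vadd', mem_vadd_iff]
  constructor
  · intro h; simpa using h
  · intro h; simpa using h

lemma body_gauge_pos (hA : IsCompact A) (ho : o ∈ interior A) {y : Plane} (hy : y ≠ 0) :
    0 < gauge ((-o) +ᵥ A) y := by
  have hbd : Bornology.IsVonNBounded ℝ ((-o) +ᵥ A) := by
    apply NormedSpace.isVonNBounded_of_isBounded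
    rw [vadd_eq_image]
    exact (hA.image (continuous_const.add continuous_id)).isBounded
  exact (gauge_pos (absorbent_nhds_zero (Dof_nhds ho)) hbd).2 hy

lemma body_gauge_cont (hA : Convex ℝ A) (ho : o ∈ interior A) :
    Continuous (gauge ((-o) +ᵥ A)) := continuous_gauge (Dof_convex hA) (Dof_nhds ho)

end Body


lemma gauge_inv_smul_self {D : Set Plane} {y : Plane} (hpos : 0 < gauge D y) :
    gauge D ((gauge D y)⁻¹ • y) = 1 := by
  rw [gauge_smul_of_nonneg (inv_nonneg.2 hpos.le), smul_eq_mul]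
  exact inv_mul_cancel₀ hpos.ne'

lemma exists_two_points {H1 H2 : Set Plane}
    (h1c : IsCompact H1) (h1v : Convex ℝ H1) (h2c : IsCompact H2) (h2v : Convex ℝ H2)
    (hint : (interior (H1 ∩ H2)).Nonempty)
    (hw1 : ∃ w ∈ H1, w ∉ H2) (hw2 : ∃ w ∈ H2, w ∉ H1) :
    ∃ z0 z1 : Plane, z0 ≠ z1 ∧ z0 ∈ frontier H1 ∩ frontier H2 ∧
      z1 ∈ frontier H1 ∩ frontier H2 := by
  obtain ⟨o, ho⟩ := hint
  have hKc : IsCompact (H1 ∩ H2) := h1c.inter_right h2c.isClosed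
  have hKv : Convex ℝ (H1 ∩ H2) := h1v.inter h2v
  have hoK : o ∈ interior (H1 ∩ H2) := ho
  have hiK : interior (H1 ∩ H2) = interior H1 ∩ interior H2 := interior_inter
  have ho1 : o ∈ interior H1 := (hiK ▸ ho).1
  have ho2 : o ∈ interior H2 := (hiK ▸ ho).2
  have hedne : ∀ θ, edir θ ≠ 0 := by
    intro θ h
    have := edir_norm θ
    rw [h] at this; simp at this
  have hγpos : ∀ θ, 0 < gauge ((-o) +ᵥ (H1 ∩ H2)) (edir θ) :=
    fun θ => body_gauge_pos hKc hoK (hedne θ)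
  set ρ : ℝ → Plane := fun θ =>
    o + (gauge ((-o) +ᵥ (H1 ∩ H2)) (edir θ))⁻¹ • edir θ with hρ
  have hρsub : ∀ θ, ρ θ - o = (gauge ((-o) +ᵥ (H1 ∩ H2)) (edir θ))⁻¹ • edir θ := by
    intro θ; rw [hρ]; simp
  -- ρ θ lies on the frontier of K
  have hρfr : ∀ θ, ρ θ ∈ frontier (H1 ∩ H2) := by
    intro θ
    rw [← body_eq_one_iff hKv hoK, hρsub θ]
    exact gauge_inv_smul_self (hγpos θ)
  -- every frontier point of K is some ρ θ
  have hsurj : ∀ z ∈ frontier (H1 ∩ H2), ∃ θ, ρ θ = z := by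
    intro z hz
    have hz1 : gauge ((-o) +ᵥ (H1 ∩ H2)) (z - o) = 1 := (body_eq_one_iff hKv hoK z).2 hz
    have hzo : z - o ≠ 0 := by
      intro h
      rw [h, gauge_zero] at hz1
      norm_num at hz1
    have hnorm : ‖z - o‖ ≠ 0 := norm_ne_zero_iff.2 hzo
    obtain ⟨θ, hθ⟩ := edir_surj (w := ‖z - o‖⁻¹ • (z - o)) (by
      rw [norm_smul, norm_inv, norm_norm, inv_mul_cancel₀ hnorm])
    refine ⟨θ, ?_⟩
    have hγe : gauge ((-o) +ᵥ (H1 ∩ H2)) (edir θ) = ‖z - o‖⁻¹ := by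
      rw [hθ, gauge_smul_of_nonneg (inv_nonneg.2 (norm_nonneg _)), smul_eq_mul, hz1, mul_one]
    rw [hρ]
    simp only
    rw [hγe, inv_inv, hθ, smul_smul, mul_inv_cancel₀ hnorm, one_smul]
    abel
  -- frontier membership via gauges
  have hfrK : frontier (H1 ∩ H2) ⊆ (frontier H1 ∩ H2) ∪ (H1 ∩ frontier H2) := by
    intro z hz
    have := frontier_inter_subset H1 H2 hz
    rwa [h1c.isClosed.closure_eq, h2c.isClosed.closure_eq] at this
  set G : ℝ → ℝ := fun θ =>
    gauge ((-o) +ᵥ H1) (ρ θ - o) - gauge ((-o) +ᵥ H2) (ρ θ - o) with hG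
  have hGzero : ∀ θ, G θ = 0 → ρ θ ∈ frontier H1 ∩ frontier H2 := by
    intro θ h0
    rw [hG] at h0
    simp only at h0
    rcases hfrK (hρfr θ) with hcase | hcase
    · have e1 : gauge ((-o) +ᵥ H1) (ρ θ - o) = 1 := (body_eq_one_iff h1v ho1 _).2 hcase.1
      have e2 : gauge ((-o) +ᵥ H2) (ρ θ - o) = 1 := by linarith
      exact ⟨hcase.1, (body_eq_one_iff h2v ho2 _).1 e2⟩
    · have e2 : gauge ((-o) +ᵥ H2) (ρ θ - o) = 1 := (body_eq_one_iff h2v ho2 _).2 hcase.2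
      have e1 : gauge ((-o) +ᵥ H1) (ρ θ - o) = 1 := by linarith
      exact ⟨(body_eq_one_iff h1v ho1 _).1 e1, hcase.2⟩
  -- a boundary point with G < 0 from a point of H1 \ H2, and symmetrically
  have hsign : ∀ w ∈ H1, w ∉ H2 → ∃ θ, G θ < 0 := by
    intro w hw1' hw2'
    have hwK : w ∉ H1 ∩ H2 := fun h => hw2' h.2
    have hγw : 1 < gauge ((-o) +ᵥ (H1 ∩ H2)) (w - o) := by
      by_contra hle
      push_neg at hle
      exact hwK ((body_le_one_iff hKv hKc.isClosed hoK w).1 hle)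
    have htpos : 0 < (gauge ((-o) +ᵥ (H1 ∩ H2)) (w - o))⁻¹ := inv_pos.2 (by linarith)
    set z : Plane := o + (gauge ((-o) +ᵥ (H1 ∩ H2)) (w - o))⁻¹ • (w - o) with hz
    have hzsub : z - o = (gauge ((-o) +ᵥ (H1 ∩ H2)) (w - o))⁻¹ • (w - o) := by rw [hz]; simp
    have hzfr : z ∈ frontier (H1 ∩ H2) := by
      rw [← body_eq_one_iff hKv hoK, hzsub]
      exact gauge_inv_smul_self (by linarith)
    have hf1w : gauge ((-o) +ᵥ H1) (w - o) ≤ 1 := (body_le_one_iff h1v h1c.isClosed ho1 w).2 hw1'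
    have hf1z : gauge ((-o) +ᵥ H1) (z - o) < 1 := by
      rw [hzsub, gauge_smul_of_nonneg htpos.le, smul_eq_mul]
      calc (gauge ((-o) +ᵥ (H1 ∩ H2)) (w - o))⁻¹ * gauge ((-o) +ᵥ H1) (w - o)
          ≤ (gauge ((-o) +ᵥ (H1 ∩ H2)) (w - o))⁻¹ * 1 := mul_le_mul_of_nonneg_left hf1w htpos.le
      _ < 1 := by rw [mul_one]; exact inv_lt_one_of_one_lt₀ hγw
    obtain ⟨θ, hθ⟩ := hsurj z hzfr
    refine ⟨θ, ?_⟩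
    rw [hG]
    simp only
    rw [hθ]
    rcases hfrK hzfr with hcase | hcase
    · exact absurd ((body_eq_one_iff h1v ho1 z).2 hcase.1) hf1z.ne
    · have h2z : gauge ((-o) +ᵥ H2) (z - o) = 1 := (body_eq_one_iff h2v ho2 z).2 hcase.2
      rw [h2z]
      linarith
  have hsign' : ∀ w ∈ H2, w ∉ H1 → ∃ θ, 0 < G θ := by
    intro w hw2' hw1'
    have hwK : w ∉ H1 ∩ H2 := fun h => hw1' h.1
    have hγw : 1 < gauge ((-o) +ᵥ (H1 ∩ H2)) (w - o) := by
      by_contra hle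
      push_neg at hle
      exact hwK ((body_le_one_iff hKv hKc.isClosed hoK w).1 hle)
    have htpos : 0 < (gauge ((-o) +ᵥ (H1 ∩ H2)) (w - o))⁻¹ := inv_pos.2 (by linarith)
    set z : Plane := o + (gauge ((-o) +ᵥ (H1 ∩ H2)) (w - o))⁻¹ • (w - o) with hz
    have hzsub : z - o = (gauge ((-o) +ᵥ (H1 ∩ H2)) (w - o))⁻¹ • (w - o) := by rw [hz]; simp
    have hzfr : z ∈ frontier (H1 ∩ H2) := by
      rw [← body_eq_one_iff hKv hoK, hzsub]
      exact gauge_inv_smul_self (by linarith)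
    have hf2w : gauge ((-o) +ᵥ H2) (w - o) ≤ 1 := (body_le_one_iff h2v h2c.isClosed ho2 w).2 hw2'
    have hf2z : gauge ((-o) +ᵥ H2) (z - o) < 1 := by
      rw [hzsub, gauge_smul_of_nonneg htpos.le, smul_eq_mul]
      calc (gauge ((-o) +ᵥ (H1 ∩ H2)) (w - o))⁻¹ * gauge ((-o) +ᵥ H2) (w - o)
          ≤ (gauge ((-o) +ᵥ (H1 ∩ H2)) (w - o))⁻¹ * 1 := mul_le_mul_of_nonneg_left hf2w htpos.le
      _ < 1 := by rw [mul_one]; exact inv_lt_one_of_one_lt₀ hγw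
    obtain ⟨θ, hθ⟩ := hsurj z hzfr
    refine ⟨θ, ?_⟩
    rw [hG]
    simp only
    rw [hθ]
    rcases hfrK hzfr with hcase | hcase
    · have h1z : gauge ((-o) +ᵥ H1) (z - o) = 1 := (body_eq_one_iff h1v ho1 z).2 hcase.1
      rw [h1z]
      linarith
    · exact absurd ((body_eq_one_iff h2v ho2 z).2 hcase.2) hf2z.ne
  obtain ⟨w1, hw1a, hw1b⟩ := hw1
  obtain ⟨w2, hw2a, hw2b⟩ := hw2
  obtain ⟨θm, hθm⟩ := hsign w1 hw1a hw1b
  obtain ⟨θp, hθp⟩ := hsign' w2 hw2a hw2b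
  -- continuity of G
  have hρcont : Continuous ρ := by
    rw [hρ]
    refine continuous_const.add (Continuous.smul (f := fun θ => (gauge ((-o) +ᵥ (H1 ∩ H2)) (edir θ))⁻¹) ?_ edir_continuous)
    exact ((body_gauge_cont hKv hoK).comp edir_continuous).inv₀ fun θ => (hγpos θ).ne'
  have hGcont : Continuous G := by
    rw [hG]
    have c1 : Continuous fun θ : ℝ => ρ θ - o := hρcont.sub continuous_const
    exact (((body_gauge_cont h1v ho1).comp c1).sub ((body_gauge_cont h2v ho2).comp c1))
  -- ρ is periodic
  have hρper : ∀ θ (k : ℤ), ρ (θ + k • (2 * Real.pi)) = ρ θ := by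
    intro θ k
    rw [hρ]
    simp only [edir_periodic θ k]
  -- normalize θp into (θm, θm + 2π]
  obtain ⟨k, hk, -⟩ := existsUnique_add_zsmul_mem_Ioc Real.two_pi_pos θp θm
  set θq : ℝ := θp + k • (2 * Real.pi) with hθq
  have hGq : 0 < G θq := by
    rw [hG]
    simp only
    rw [hθq, hρper θp k]
    exact hθp
  have hqlt : θq < θm + 2 * Real.pi := by
    rcases lt_or_eq_of_le hk.2 with h | h
    · exact h
    · exfalso
      have : ρ θq = ρ θm := by
        rw [h, show θm + 2 * Real.pi = θm + (1 : ℤ) • (2 * Real.pi) by simp, hρper]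
      rw [hG] at hGq hθm
      simp only at hGq hθm
      rw [this] at hGq
      linarith
  have hmlt : θm < θq := hk.1
  -- two zeros of G
  have hGm2 : G (θm + 2 * Real.pi) < 0 := by
    have : ρ (θm + 2 * Real.pi) = ρ θm := by
      rw [show θm + 2 * Real.pi = θm + (1 : ℤ) • (2 * Real.pi) by simp, hρper]
    rw [hG] at hθm ⊢
    simp only at hθm ⊢
    rw [this]
    exact hθm
  obtain ⟨θ0, hθ0mem, hθ0⟩ : ∃ θ0 ∈ Ioo θm θq, G θ0 = 0 := by
    have := intermediate_value_Ioo hmlt.le hGcont.continuousOn (a := θm) (b := θq)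
    have h0 : (0:ℝ) ∈ Ioo (G θm) (G θq) := ⟨hθm, hGq⟩
    obtain ⟨θ0, hmem, heq⟩ := this h0
    exact ⟨θ0, hmem, heq⟩
  obtain ⟨θ1, hθ1mem, hθ1⟩ : ∃ θ1 ∈ Ioo θq (θm + 2 * Real.pi), G θ1 = 0 := by
    have := intermediate_value_Ioo' hqlt.le hGcont.continuousOn (a := θq) (b := θm + 2 * Real.pi)
    have h0 : (0:ℝ) ∈ Ioo (G (θm + 2 * Real.pi)) (G θq) := ⟨hGm2, hGq⟩
    obtain ⟨θ1, hmem, heq⟩ := this h0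
    exact ⟨θ1, hmem, heq⟩
  refine ⟨ρ θ0, ρ θ1, ?_, hGzero θ0 hθ0, hGzero θ1 hθ1⟩
  intro heq
  have hee : edir θ0 = edir θ1 := by
    have h1 : ρ θ0 - o = _ := hρsub θ0
    have h2 : ρ θ1 - o = _ := hρsub θ1
    rw [heq] at h1
    have h3 : (gauge ((-o) +ᵥ (H1 ∩ H2)) (edir θ0))⁻¹ • edir θ0
        = (gauge ((-o) +ᵥ (H1 ∩ H2)) (edir θ1))⁻¹ • edir θ1 := by rw [← h1, ← h2]
    have h4 : edir θ0 = (gauge ((-o) +ᵥ (H1 ∩ H2)) (edir θ0) *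
        (gauge ((-o) +ᵥ (H1 ∩ H2)) (edir θ1))⁻¹) • edir θ1 := by
      have := congrArg (fun v => gauge ((-o) +ᵥ (H1 ∩ H2)) (edir θ0) • v) h3
      simp only [smul_smul] at this
      rwa [mul_inv_cancel₀ (hγpos θ0).ne', one_smul] at this
    exact unit_smul_eq (edir_norm θ0) (edir_norm θ1)
      (mul_pos (hγpos θ0) (inv_pos.2 (hγpos θ1))) h4
  obtain ⟨j, hj⟩ := edir_inj hee
  have hθne : θ0 ≠ θ1 := by
    intro h
    rw [h] at hθ0mem
    exact absurd hθ1mem.1 (not_lt.2 hθ0mem.2.le)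
  have hbound : |θ0 - θ1| < 2 * Real.pi := by
    rw [abs_sub_lt_iff]
    constructor
    · have := hθ0mem.1
      have := hθ1mem.1
      have := hθ0mem.2
      linarith
    · have := hθ1mem.2
      have := hθ0mem.1
      linarith
  rw [hj] at hbound
  have hj0 : j = 0 := by
    by_contra hjne
    have : (1:ℝ) ≤ |(j:ℝ)| := by
      rw [← Int.cast_abs]
      exact_mod_cast Int.one_le_abs (by exact_mod_cast hjne)
    rw [abs_mul] at hbound
    have h2π : |2 * Real.pi| = 2 * Real.pi := abs_of_pos Real.two_pi_pos
    rw [h2π] at hbound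
    nlinarith [Real.two_pi_pos]
  rw [hj0] at hj
  simp at hj
  exact hθne (by linarith)


lemma card_le_two {H1 H2 : Set Plane}
    (h1c : IsCompact H1) (h1v : Convex ℝ H1) (h1i : (interior H1).Nonempty)
    (h1s : ∀ x ∈ frontier H1, ∀ y ∈ frontier H1, x ≠ y → openSegment ℝ x y ⊆ interior H1)
    (h2c : IsCompact H2) (h2v : Convex ℝ H2) (h2i : (interior H2).Nonempty)
    (h2s : ∀ x ∈ frontier H2, ∀ y ∈ frontier H2, x ≠ y → openSegment ℝ x y ⊆ interior H2)
    (hint : (interior (H1 ∩ H2)).Nonempty)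
    (hZ : ∀ w1 w2 w3 : Plane,
      (‖w1‖ = 1 ∧ sfn H1 w1 = sfn H2 w1) → (‖w2‖ = 1 ∧ sfn H1 w2 = sfn H2 w2) →
      (‖w3‖ = 1 ∧ sfn H1 w3 = sfn H2 w3) → w1 = w2 ∨ w1 = w3 ∨ w2 = w3) :
    (frontier H1 ∩ frontier H2).encard ≤ 2 := by
  have h1ne : H1.Nonempty := h1i.mono interior_subset
  have h2ne : H2.Nonempty := h2i.mono interior_subset
  -- step I : every common boundary point has a unit normal of K in Z
  have hz_normal : ∀ z ∈ frontier H1 ∩ frontier H2, ∃ w : Plane,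
      (‖w‖ = 1 ∧ sfn H1 w = sfn H2 w) ∧ ∀ y ∈ H1 ∩ H2, ⟪w, y⟫ ≤ ⟪w, z⟫ := by
    rintro z ⟨hz1, hz2⟩
    have hzH1 : z ∈ H1 := h1c.isClosed.frontier_subset hz1
    have hzH2 : z ∈ H2 := h2c.isClosed.frontier_subset hz2
    obtain ⟨u, hu, hun⟩ := exists_unit_normal h1v h1c.isClosed h1i hz1
    obtain ⟨v, hv, hvn⟩ := exists_unit_normal h2v h2c.isClosed h2i hz2
    have hdu : sfn H1 u - sfn H2 u ≤ 0 := by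
      have e1 : sfn H1 u = ⟪u, z⟫ := le_antisymm (sfn_le h1c h1ne hun) (le_sfn h1c h1ne hzH1 u)
      have e2 : ⟪u, z⟫ ≤ sfn H2 u := le_sfn h2c h2ne hzH2 u
      linarith
    have hdv : 0 ≤ sfn H1 v - sfn H2 v := by
      have e1 : sfn H2 v = ⟪v, z⟫ := le_antisymm (sfn_le h2c h2ne hvn) (le_sfn h2c h2ne hzH2 v)
      have e2 : ⟪v, z⟫ ≤ sfn H1 v := le_sfn h1c h1ne hzH1 v
      linarith
    have hunv : u ≠ -v := by
      intro heq
      obtain ⟨o, ho⟩ := hint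
      have l1 : ⟪u, o⟫ < ⟪u, z⟫ :=
        inner_lt_of_interior (unit_ne_zero hu) (interior_mono inter_subset_left ho) hun
      have l2 : ⟪v, o⟫ < ⟪v, z⟫ :=
        inner_lt_of_interior (unit_ne_zero hv) (interior_mono inter_subset_right ho) hvn
      rw [heq, inner_neg_left, inner_neg_left] at l1
      linarith
    -- interpolate between the two normals
    set F : ℝ → Plane := fun t => t • u + (1 - t) • v with hF
    have hFne : ∀ t : ℝ, F t ≠ 0 := by
      intro t h
      rw [hF] at h
      simp only at h
      rcases eq_or_ne t 0 with rfl | ht0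
      · simp at h
        exact unit_ne_zero hv h
      · rcases unit_opp hu hv h ht0 with h' | h'
        · rw [h'] at h
          have hcomb : t • u + (1 - t) • u = u := by module
          rw [hcomb] at h
          exact unit_ne_zero hu h
        · apply hunv
          rw [h']
          simp
    set g : ℝ → Plane := fun t => (‖F t‖)⁻¹ • F t with hg
    have hgunit : ∀ t : ℝ, ‖g t‖ = 1 := by
      intro t
      rw [hg]
      simp only
      rw [norm_smul, norm_inv, norm_norm, inv_mul_cancel₀ (norm_ne_zero_iff.2 (hFne t))]
    set q : ℝ → ℝ := fun t => sfn H1 (g t) - sfn H2 (g t) with hq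
    have hqcont : Continuous q := by
      have hFcont : Continuous F := by
        rw [hF]
        exact (continuous_id.smul continuous_const).add
          ((continuous_const.sub continuous_id).smul continuous_const)
      have hgcont : Continuous g := by
        rw [hg]
        exact ((hFcont.norm.inv₀ fun t => norm_ne_zero_iff.2 (hFne t))).smul hFcont
      rw [hq]
      exact ((sfn_continuous h1c h1ne).comp hgcont).sub ((sfn_continuous h2c h2ne).comp hgcont)
    have hg1 : g 1 = u := by
      rw [hg, hF]
      simp [hu]
    have hg0 : g 0 = v := by
      rw [hg, hF]
      simp [hv]
    have hq1 : q 1 ≤ 0 := by rw [hq]; simp only [hg1]; exact hdu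
    have hq0 : 0 ≤ q 0 := by rw [hq]; simp only [hg0]; exact hdv
    obtain ⟨t0, ht0mem, ht0⟩ : ∃ t0 ∈ Icc (0:ℝ) 1, q t0 = 0 := by
      have hsub := intermediate_value_Icc' (by norm_num : (0:ℝ) ≤ 1) hqcont.continuousOn
      have h0 : (0:ℝ) ∈ Icc (q 1) (q 0) := ⟨hq1, hq0⟩
      obtain ⟨t0, hmem, heq⟩ := hsub h0
      exact ⟨t0, hmem, heq⟩
    refine ⟨g t0, ⟨hgunit t0, by rw [hq] at ht0; simp only at ht0; linarith⟩, ?_⟩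
    intro y hy
    have hcoord : ∀ x : Plane, ⟪g t0, x⟫ = (‖F t0‖)⁻¹ * (t0 * ⟪u, x⟫ + (1 - t0) * ⟪v, x⟫) := by
      intro x
      rw [hg]
      simp only
      rw [real_inner_smul_left, hF]
      simp only
      rw [inner_add_left, real_inner_smul_left, real_inner_smul_left]
    rw [hcoord y, hcoord z]
    have hinv : (0:ℝ) ≤ (‖F t0‖)⁻¹ := inv_nonneg.2 (norm_nonneg _)
    have hy1 := hun y hy.1
    have hy2 := hvn y hy.2
    have ht0a := ht0mem.1
    have ht0b := ht0mem.2
    apply mul_le_mul_of_nonneg_left _ hinv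
    nlinarith
  -- step II : distinct common boundary points cannot share a normal
  have hshare : ∀ z z' w : Plane, z ∈ frontier H1 ∩ frontier H2 →
      z' ∈ frontier H1 ∩ frontier H2 → z ≠ z' → ‖w‖ = 1 →
      (∀ y ∈ H1 ∩ H2, ⟪w, y⟫ ≤ ⟪w, z⟫) → (∀ y ∈ H1 ∩ H2, ⟪w, y⟫ ≤ ⟪w, z'⟫) → False := by
    intro z z' w hzS hz'S hne hw hnz hnz'
    have hzK : z ∈ H1 ∩ H2 := ⟨h1c.isClosed.frontier_subset hzS.1, h2c.isClosed.frontier_subset hzS.2⟩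
    have hz'K : z' ∈ H1 ∩ H2 :=
      ⟨h1c.isClosed.frontier_subset hz'S.1, h2c.isClosed.frontier_subset hz'S.2⟩
    have heqz : ⟪w, z⟫ = ⟪w, z'⟫ := le_antisymm (hnz' z hzK) (hnz z' hz'K)
    set m : Plane := (1/2 : ℝ) • z + (1/2 : ℝ) • z' with hm
    have hmseg : m ∈ openSegment ℝ z z' := ⟨1/2, 1/2, by norm_num, by norm_num, by norm_num, rfl⟩
    have hmint : m ∈ interior (H1 ∩ H2) := by
      rw [interior_inter]
      exact ⟨h1s z hzS.1 z' hz'S.1 hne hmseg, h2s z hzS.2 z' hz'S.2 hne hmseg⟩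
    have hlt : ⟪w, m⟫ < ⟪w, z⟫ := inner_lt_of_interior (unit_ne_zero hw) hmint hnz
    rw [hm, inner_add_right, real_inner_smul_right, real_inner_smul_right, ← heqz] at hlt
    linarith
  -- step III : conclude the cardinality bound
  by_contra hgt
  push_neg at hgt
  have h3le : (3:ℕ∞) ≤ (frontier H1 ∩ frontier H2).encard := by
    have := Order.add_one_le_of_lt hgt
    norm_num at this ⊢
    convert this using 1
  obtain ⟨t, hts, htcard⟩ := Set.exists_subset_encard_eq h3le
  obtain ⟨a, b, c, hab, hac, hbc, rfl⟩ := Set.encard_eq_three.1 htcard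
  have haS : a ∈ frontier H1 ∩ frontier H2 := hts (by simp)
  have hbS : b ∈ frontier H1 ∩ frontier H2 := hts (by simp)
  have hcS : c ∈ frontier H1 ∩ frontier H2 := hts (by simp)
  obtain ⟨wa, hwaZ, hwan⟩ := hz_normal a haS
  obtain ⟨wb, hwbZ, hwbn⟩ := hz_normal b hbS
  obtain ⟨wc, hwcZ, hwcn⟩ := hz_normal c hcS
  rcases hZ wa wb wc hwaZ hwbZ hwcZ with h | h | h
  · exact hshare a b wa haS hbS hab hwaZ.1 hwan (h ▸ hwbn)
  · exact hshare a c wa haS hcS hac hwaZ.1 hwan (h ▸ hwcn)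
  · exact hshare b c wb hbS hcS hbc hwbZ.1 hwbn (h ▸ hwcn)


lemma strict_homothet {C : Set Plane} (hC : IsStrictConvexDomain C) {x : Plane} {l : ℝ}
    (hl : 0 < l) :
    ∀ p ∈ frontier (x +ᵥ l • C), ∀ q ∈ frontier (x +ᵥ l • C), p ≠ q →
      openSegment ℝ p q ⊆ interior (x +ᵥ l • C) := by
  intro p hp q hq hpq w hw
  rw [frontier_homothet hl] at hp hq
  obtain ⟨p', hp', rfl⟩ := mem_homothet.1 hp
  obtain ⟨q', hq', rfl⟩ := mem_homothet.1 hq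
  have hpq' : p' ≠ q' := by
    rintro rfl; exact hpq rfl
  obtain ⟨a, b, ha, hb, hab, rfl⟩ := hw
  rw [interior_homothet hl]
  refine mem_homothet.2 ⟨a • p' + b • q', hC.2 p' hp' q' hq' hpq' ⟨a, b, ha, hb, hab, rfl⟩, ?_⟩
  have hb' : b = 1 - a := by linarith
  subst hb'
  module

theorem stmt0 (C H1 H2 : Set Plane) (x1 x2 : Plane) (l1 l2 : ℝ)
    (hC : IsStrictConvexDomain C) (hl1 : 0 < l1) (hl2 : 0 < l2)
    (hH1 : H1 = x1 +ᵥ l1 • C) (hH2 : H2 = x2 +ᵥ l2 • C)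
    (hint : (interior (H1 ∩ H2)).Nonempty)
    (hred1 : H1 ∩ H2 ⊂ H1) (hred2 : H1 ∩ H2 ⊂ H2) :
    (frontier H1 ∩ frontier H2).encard = 2 := by
  obtain ⟨⟨hCc, hCv, hCi⟩, hCs⟩ := hC
  have hCne : C.Nonempty := hCi.mono interior_subset
  have h1c : IsCompact H1 := hH1 ▸ isCompact_homothet hCc
  have h2c : IsCompact H2 := hH2 ▸ isCompact_homothet hCc
  have h1v : Convex ℝ H1 := hH1 ▸ convex_homothet hCv
  have h2v : Convex ℝ H2 := hH2 ▸ convex_homothet hCv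
  obtain ⟨ci, hci⟩ := hCi
  have h1i : (interior H1).Nonempty := by
    rw [hH1, interior_homothet hl1]
    exact ⟨x1 + l1 • ci, mem_homothet.2 ⟨ci, hci, rfl⟩⟩
  have h2i : (interior H2).Nonempty := by
    rw [hH2, interior_homothet hl2]
    exact ⟨x2 + l2 • ci, mem_homothet.2 ⟨ci, hci, rfl⟩⟩
  have h1ne : H1.Nonempty := h1i.mono interior_subset
  have h2ne : H2.Nonempty := h2i.mono interior_subset
  have h1s : ∀ x ∈ frontier H1, ∀ y ∈ frontier H1, x ≠ y → openSegment ℝ x y ⊆ interior H1 := by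
    rw [hH1]; exact strict_homothet ⟨⟨hCc, hCv, ⟨ci, hci⟩⟩, hCs⟩ hl1
  have h2s : ∀ x ∈ frontier H2, ∀ y ∈ frontier H2, x ≠ y → openSegment ℝ x y ⊆ interior H2 := by
    rw [hH2]; exact strict_homothet ⟨⟨hCc, hCv, ⟨ci, hci⟩⟩, hCs⟩ hl2
  have hsfn1 : ∀ u, sfn H1 u = ⟪u, x1⟫ + l1 * sfn C u := by
    intro u; rw [hH1]; exact sfn_homothet hCc hCne x1 hl1 u
  have hsfn2 : ∀ u, sfn H2 u = ⟪u, x2⟫ + l2 * sfn C u := by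
    intro u; rw [hH2]; exact sfn_homothet hCc hCne x2 hl2 u
  -- points witnessing reducedness
  have hw1 : ∃ w ∈ H1, w ∉ H2 := by
    obtain ⟨w, hwa, hwb⟩ := exists_of_ssubset hred1
    exact ⟨w, hwa, fun h => hwb ⟨hwa, h⟩⟩
  have hw2 : ∃ w ∈ H2, w ∉ H1 := by
    obtain ⟨w, hwa, hwb⟩ := exists_of_ssubset hred2
    exact ⟨w, hwa, fun h => hwb ⟨h, hwa⟩⟩
  -- the set of unit vectors with equal support values is small
  have hZ : ∀ w1 w2 w3 : Plane,
      (‖w1‖ = 1 ∧ sfn H1 w1 = sfn H2 w1) → (‖w2‖ = 1 ∧ sfn H1 w2 = sfn H2 w2) →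
      (‖w3‖ = 1 ∧ sfn H1 w3 = sfn H2 w3) → w1 = w2 ∨ w1 = w3 ∨ w2 = w3 := by
    intro w1 w2 w3 hz1 hz2 hz3
    rcases lt_trichotomy l1 l2 with hll | hll | hll
    · -- l1 < l2
      have hpos : 0 < l2 - l1 := sub_pos.2 hll
      have hBc : IsCompact ((x2 - x1) +ᵥ (l2 - l1) • C) := isCompact_homothet hCc
      have hBi : (interior ((x2 - x1) +ᵥ (l2 - l1) • C)).Nonempty := by
        rw [interior_homothet hpos]
        exact ⟨(x2 - x1) + (l2 - l1) • ci, mem_homothet.2 ⟨ci, hci, rfl⟩⟩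
      have hsfnB : ∀ u, sfn ((x2 - x1) +ᵥ (l2 - l1) • C) u
          = ⟪u, x2 - x1⟫ + (l2 - l1) * sfn C u := fun u => sfn_homothet hCc hCne _ hpos u
      have hZiff : ∀ u, sfn H1 u = sfn H2 u → sfn ((x2 - x1) +ᵥ (l2 - l1) • C) u = 0 := by
        intro u h
        rw [hsfn1, hsfn2] at h
        rw [hsfnB, inner_sub_right]
        linarith
      have h0 : (0:Plane) ∉ (x2 - x1) +ᵥ (l2 - l1) • C := by
        intro h0B
        have hge : ∀ u, sfn H1 u ≤ sfn H2 u := by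
          intro u
          have hb := le_sfn hBc ⟨0, h0B⟩ h0B u
          rw [inner_zero_right, hsfnB u, inner_sub_right] at hb
          rw [hsfn1, hsfn2]
          linarith
        have hsub : H1 ⊆ H2 := subset_of_sfn_le h1c h1ne h2c h2ne h2v hge
        exact absurd (Set.inter_eq_self_of_subset_left hsub) hred1.ne
      exact core hBc hBi h0 hz1.1 hz2.1 hz3.1 (hZiff w1 hz1.2) (hZiff w2 hz2.2) (hZiff w3 hz3.2)
    · -- l1 = l2 : translates
      have hx : x1 - x2 ≠ 0 := by
        intro h
        have hxe : x1 = x2 := sub_eq_zero.1 h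
        have hHe : H1 = H2 := by rw [hH1, hH2, hxe, hll]
        rw [hHe, Set.inter_self] at hred1
        exact hred1.ne rfl
      have hZiff : ∀ u, sfn H1 u = sfn H2 u → ⟪u, x1 - x2⟫ = 0 := by
        intro u h
        rw [hsfn1, hsfn2, hll] at h
        rw [inner_sub_right]
        linarith
      by_contra hcon
      push_neg at hcon
      obtain ⟨h12, h13, h23⟩ := hcon
      have h21 : w2 = -w1 := by
        by_contra h
        exact hx (perp_two hz1.1 hz2.1 (Ne.symm h12) h (hZiff w1 hz1.2) (hZiff w2 hz2.2))
      have h31 : w3 = -w1 := by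
        by_contra h
        exact hx (perp_two hz1.1 hz3.1 (Ne.symm h13) h (hZiff w1 hz1.2) (hZiff w3 hz3.2))
      exact h23 (h21.trans h31.symm)
    · -- l2 < l1
      have hpos : 0 < l1 - l2 := sub_pos.2 hll
      have hBc : IsCompact ((x1 - x2) +ᵥ (l1 - l2) • C) := isCompact_homothet hCc
      have hBi : (interior ((x1 - x2) +ᵥ (l1 - l2) • C)).Nonempty := by
        rw [interior_homothet hpos]
        exact ⟨(x1 - x2) + (l1 - l2) • ci, mem_homothet.2 ⟨ci, hci, rfl⟩⟩
      have hsfnB : ∀ u, sfn ((x1 - x2) +ᵥ (l1 - l2) • C) u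
          = ⟪u, x1 - x2⟫ + (l1 - l2) * sfn C u := fun u => sfn_homothet hCc hCne _ hpos u
      have hZiff : ∀ u, sfn H1 u = sfn H2 u → sfn ((x1 - x2) +ᵥ (l1 - l2) • C) u = 0 := by
        intro u h
        rw [hsfn1, hsfn2] at h
        rw [hsfnB, inner_sub_right]
        linarith
      have h0 : (0:Plane) ∉ (x1 - x2) +ᵥ (l1 - l2) • C := by
        intro h0B
        have hge : ∀ u, sfn H2 u ≤ sfn H1 u := by
          intro u
          have hb := le_sfn hBc ⟨0, h0B⟩ h0B u
          rw [inner_zero_right, hsfnB u, inner_sub_right] at hb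
          rw [hsfn1, hsfn2]
          linarith
        have hsub : H2 ⊆ H1 := subset_of_sfn_le h2c h2ne h1c h1ne h1v hge
        exact absurd (Set.inter_eq_self_of_subset_right hsub) hred2.ne
      exact core hBc hBi h0 hz1.1 hz2.1 hz3.1 (hZiff w1 hz1.2) (hZiff w2 hz2.2) (hZiff w3 hz3.2)
  have hle := card_le_two h1c h1v h1i h1s h2c h2v h2i h2s hint hZ
  obtain ⟨z0, z1, hne01, hz0, hz1⟩ := exists_two_points h1c h1v h2c h2v hint hw1 hw2
  refine le_antisymm hle ?_
  calc (2:ℕ∞) = ({z0, z1} : Set Plane).encard := (Set.encard_pair hne01).symm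
  _ ≤ (frontier H1 ∩ frontier H2).encard := Set.encard_mono (Set.pair_subset hz0 hz1)
end

section
/- Let H = ⋂ᵢ₌₁ⁿ Hᵢ be a proper intersection of homothets of a smooth strictly convex domain C in ℝ², with n ≥ 2. If v ∈ bd(H) lies on the boundaries of at least two of the generating homothets, then v is a singular point of H, i.e., H admits at least two distinct supporting lines at v. -/
open Pointwise
open scoped RealInnerProductSpace

/-- Supporting hyperplane at a non-interior point of a convex set with nonempty interior. -/
lemma exists_outer_normal' {K : Set Plane} (hKconv : Convex ℝ K)
    (hKint : (interior K).Nonempty) {v : Plane} (hv : v ∉ interior K) :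
    ∃ u : Plane, ‖u‖ = 1 ∧ ∀ y ∈ K, (inner ℝ u y : ℝ) ≤ inner ℝ u v := by
  obtain ⟨f, hf⟩ := geometric_hahn_banach_open_point hKconv.interior isOpen_interior hv
  obtain ⟨a, ha⟩ := hKint
  have hfa : f a < f v := hf a ha
  have hfK : ∀ y ∈ K, f y ≤ f v := by
    intro y hy
    by_contra hgt
    push_neg at hgt
    set t : ℝ := (f v - f a) / (f y - f a) with ht
    have hya : f a < f y := hfa.trans hgt
    have h1 : 0 < f y - f a := by linarith
    have ht0 : 0 < t := div_pos (by linarith) h1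
    have ht1 : t < 1 := (div_lt_one h1).mpr (by linarith)
    have hz : (1 - t) • a + t • y ∈ interior K :=
      hKconv.combo_interior_self_mem_interior ha hy (by linarith) ht0.le (by ring)
    have := hf _ hz
    rw [map_add, map_smul, map_smul] at this
    have htv : (1 - t) * f a + t * f y = f v := by
      have key : t * (f y - f a) = f v - f a := by rw [ht]; exact div_mul_cancel₀ _ h1.ne'
      linarith
    simp only [smul_eq_mul] at this
    linarith
  set u₀ : Plane := (InnerProductSpace.toDual ℝ Plane).symm f with hu₀
  have hinner : ∀ z : Plane, (inner ℝ u₀ z : ℝ) = f z := fun z =>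
    InnerProductSpace.toDual_symm_apply
  have hne : u₀ ≠ 0 := by
    intro h
    have := hinner a
    have hv' := hinner v
    rw [h] at this hv'
    simp at this hv'
    linarith
  refine ⟨‖u₀‖⁻¹ • u₀, ?_, ?_⟩
  · simp [norm_smul, norm_ne_zero_iff.mpr hne, inv_mul_cancel₀]
  · intro y hy
    rw [real_inner_smul_left, real_inner_smul_left, hinner, hinner]
    exact mul_le_mul_of_nonneg_left (hfK y hy) (by positivity)

/-- Interior points are strictly below the supremum of a linear functional. -/
lemma interior_lt_max {C : Set Plane} {u c : Plane} (hu : ‖u‖ = 1)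
    (hmax : ∀ y ∈ C, (inner ℝ u y : ℝ) ≤ inner ℝ u c)
    {z : Plane} (hz : z ∈ interior C) : (inner ℝ u z : ℝ) < inner ℝ u c := by
  obtain ⟨ε, hε, hball⟩ := Metric.isOpen_iff.mp isOpen_interior z hz
  have hy : z + (ε / 2) • u ∈ C := by
    apply interior_subset
    apply hball
    rw [Metric.mem_ball, dist_eq_norm]
    rw [add_sub_cancel_left, norm_smul, hu, mul_one, Real.norm_eq_abs,
      abs_of_pos (half_pos hε)]
    linarith
  have := hmax _ hy
  rw [inner_add_right, real_inner_smul_right, real_inner_self_eq_norm_sq, hu] at this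
  nlinarith

/-- In a strictly convex domain, a linear functional has at most one maximizer. -/
lemma unique_max {C : Set Plane} (hC : IsStrictConvexDomain C) {u c₁ c₂ : Plane}
    (hu : ‖u‖ = 1) (h₁ : c₁ ∈ C) (h₂ : c₂ ∈ C)
    (hm₁ : ∀ y ∈ C, (inner ℝ u y : ℝ) ≤ inner ℝ u c₁)
    (hm₂ : ∀ y ∈ C, (inner ℝ u y : ℝ) ≤ inner ℝ u c₂) : c₁ = c₂ := by
  obtain ⟨⟨hcomp, hconv, hint⟩, hstrict⟩ := hC
  have hM : (inner ℝ u c₁ : ℝ) = inner ℝ u c₂ := le_antisymm (hm₂ c₁ h₁) (hm₁ c₂ h₂)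
  by_contra hne
  have hfr : ∀ c ∈ C, (∀ y ∈ C, (inner ℝ u y : ℝ) ≤ inner ℝ u c) → c ∈ frontier C := by
    intro c hc hm
    refine ⟨subset_closure hc, fun hci => absurd (interior_lt_max hu hm hci) (lt_irrefl _)⟩
  have hmid : (1/2 : ℝ) • c₁ + (1/2 : ℝ) • c₂ ∈ interior C := by
    apply hstrict c₁ (hfr c₁ h₁ hm₁) c₂ (hfr c₂ h₂ hm₂) hne
    exact ⟨1/2, 1/2, by norm_num, by norm_num, by norm_num, rfl⟩
  have := interior_lt_max hu hm₁ hmid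
  rw [inner_add_right, real_inner_smul_right, real_inner_smul_right, hM] at this
  linarith

/-- Two homothets sharing a point with the same parameter point are nested. -/
lemma homothet_subset {C : Set Plane} (hconv : Convex ℝ C) {x₁ x₂ : Plane} {l₁ l₂ : ℝ}
    (h₁ : 0 < l₁) (h₂ : 0 < l₂) (hle : l₁ ≤ l₂) {c : Plane} (hc : c ∈ C)
    (he : x₁ + l₁ • c = x₂ + l₂ • c) : x₁ +ᵥ l₁ • C ⊆ x₂ +ᵥ l₂ • C := by
  rintro z hz
  rw [Set.mem_vadd_set] at hz
  obtain ⟨w₀, hw₀, rfl⟩ := hz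
  rw [Set.mem_smul_set] at hw₀
  obtain ⟨w, hw, rfl⟩ := hw₀
  rw [Set.mem_vadd_set]
  refine ⟨l₂ • (((l₂ - l₁)/l₂) • c + (l₁/l₂) • w), ?_, ?_⟩
  · exact Set.smul_mem_smul_set (hconv hc hw (div_nonneg (by linarith) h₂.le) (by positivity)
      (by field_simp; ring))
  · have hl₂ : (l₂ : ℝ) ≠ 0 := h₂.ne'
    have e1 : l₂ • (((l₂ - l₁)/l₂) • c + (l₁/l₂) • w) = (l₂ - l₁) • c + l₁ • w := by
      rw [smul_add, smul_smul, smul_smul]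
      congr 1 <;> congr 1 <;> field_simp
    rw [e1]
    have : x₂ = x₁ + l₁ • c - l₂ • c := by
      rw [eq_sub_iff_add_eq, ← he]
    rw [this, sub_smul]
    simp only [vadd_eq_add]
    abel

/-- If one generator contains another, removing it does not change the intersection,
contradicting properness. -/
lemma redundant {n : ℕ} {H : Fin n → Set Plane} {i j : Fin n} (hij : i ≠ j)
    (hsub : H i ⊆ H j)
    (hred : (⋂ k, H k) ⊂ ⋂ k ∈ {k : Fin n | k ≠ j}, H k) : False := by
  apply hred.not_subset
  intro z hz
  rw [Set.mem_iInter]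
  intro k
  by_cases hk : k = j
  · subst hk
    exact hsub (Set.mem_iInter₂.mp hz i hij)
  · exact Set.mem_iInter₂.mp hz k hk

/-- From an outer normal of a homothet at `v`, get the corresponding maximizer in `C`. -/
lemma maximizer_of_normal {C : Set Plane} {x₀ u v : Plane} {l : ℝ} (hl : 0 < l)
    (hmem : v ∈ x₀ +ᵥ l • C)
    (hnorm : ∀ y ∈ x₀ +ᵥ l • C, (inner ℝ u y : ℝ) ≤ inner ℝ u v) :
    ∃ c ∈ C, v = x₀ + l • c ∧ ∀ y ∈ C, (inner ℝ u y : ℝ) ≤ inner ℝ u c := by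
  rw [Set.mem_vadd_set] at hmem
  obtain ⟨c₀, hc₀, hveq⟩ := hmem
  rw [Set.mem_smul_set] at hc₀
  obtain ⟨c, hc, rfl⟩ := hc₀
  refine ⟨c, hc, hveq.symm, ?_⟩
  intro y hy
  have hymem : x₀ + l • y ∈ x₀ +ᵥ l • C := by
    rw [Set.mem_vadd_set]
    exact ⟨l • y, Set.smul_mem_smul_set hy, rfl⟩
  have := hnorm _ hymem
  rw [← hveq] at this
  simp only [vadd_eq_add, inner_add_right, real_inner_smul_right] at this
  have hll : (0 : ℝ) < l := hl
  nlinarith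

theorem stmt6 (C : Set Plane) (hC : IsStrictConvexDomain C) (hCs : IsSmoothDomain C)
    (n : ℕ) (hn : 2 ≤ n) (x : Fin n → Plane) (l : Fin n → ℝ) (hl : ∀ i, 0 < l i)
    (H : Fin n → Set Plane) (hH : ∀ i, H i = x i +ᵥ l i • C)
    (hint : (interior (⋂ i, H i)).Nonempty)
    (hred : ∀ j : Fin n, (⋂ i, H i) ⊂ ⋂ i ∈ {i : Fin n | i ≠ j}, H i)
    (v : Plane) (hv : v ∈ frontier (⋂ i, H i))
    (i j : Fin n) (hij : i ≠ j) (hvi : v ∈ frontier (H i)) (hvj : v ∈ frontier (H j)) :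
    IsSingularPt (⋂ i, H i) v := by
  obtain ⟨⟨hCcomp, hCconv, hCint⟩, hCstrict⟩ := hC
  have hHconv : ∀ k, Convex ℝ (H k) := by
    intro k
    rw [hH k]
    exact (hCconv.smul (l k)).vadd (x k)
  have hHclosed : ∀ k, IsClosed (H k) := by
    intro k
    rw [hH k]
    have h1 : IsCompact ((fun p => x k + l k • p) '' C) :=
      hCcomp.image (continuous_const.add (continuous_const_smul _))
    have h2 : x k +ᵥ l k • C = (fun p => x k + l k • p) '' C := by
      ext z
      simp only [Set.mem_vadd_set, Set.mem_smul_set, Set.mem_image, vadd_eq_add]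
      constructor
      · rintro ⟨_, ⟨w, hw, rfl⟩, rfl⟩; exact ⟨w, hw, rfl⟩
      · rintro ⟨w, hw, rfl⟩; exact ⟨l k • w, ⟨w, hw, rfl⟩, rfl⟩
    rw [h2]
    exact h1.isClosed
  have hHint : ∀ k, (interior (H k)).Nonempty :=
    fun k => hint.mono (interior_mono (Set.iInter_subset H k))
  have hvmem : v ∈ ⋂ k, H k := by
    have h1 : v ∈ closure (⋂ k, H k) := hv.1
    rwa [(isClosed_iInter hHclosed).closure_eq] at h1
  obtain ⟨ui, hui_norm, hui⟩ := exists_outer_normal' (hHconv i) (hHint i) hvi.2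
  obtain ⟨uj, huj_norm, huj⟩ := exists_outer_normal' (hHconv j) (hHint j) hvj.2
  have hvmi : v ∈ H i := Set.mem_iInter.mp hvmem i
  have hvmj : v ∈ H j := Set.mem_iInter.mp hvmem j
  refine ⟨hv, ui, uj, ?_, ⟨hui_norm, fun y hy => hui y (Set.mem_iInter.mp hy i)⟩,
    ⟨huj_norm, fun y hy => huj y (Set.mem_iInter.mp hy j)⟩⟩
  intro heq
  subst heq
  -- now ui is an outer normal of both H i and H j at v
  have hvi' : v ∈ x i +ᵥ l i • C := by rwa [hH i] at hvmi
  have hvj' : v ∈ x j +ᵥ l j • C := by rwa [hH j] at hvmj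
  have hui' : ∀ y ∈ x i +ᵥ l i • C, (inner ℝ ui y : ℝ) ≤ inner ℝ ui v := by
    intro y hy; exact hui y (by rwa [hH i])
  have huj' : ∀ y ∈ x j +ᵥ l j • C, (inner ℝ ui y : ℝ) ≤ inner ℝ ui v := by
    intro y hy; exact huj y (by rwa [hH j])
  obtain ⟨ci, hci, hvi_eq, hmi⟩ := maximizer_of_normal (hl i) hvi' hui'
  obtain ⟨cj, hcj, hvj_eq, hmj⟩ := maximizer_of_normal (hl j) hvj' huj'
  have hcc : ci = cj :=
    unique_max ⟨⟨hCcomp, hCconv, hCint⟩, hCstrict⟩ hui_norm hci hcj hmi hmj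
  subst hcc
  have he : x i + l i • ci = x j + l j • ci := by rw [← hvi_eq, ← hvj_eq]
  rcases le_total (l i) (l j) with hle | hle
  · have hsub : H i ⊆ H j := by
      rw [hH i, hH j]
      exact homothet_subset hCconv (hl i) (hl j) hle hci he
    exact redundant hij hsub (hred j)
  · have hsub : H j ⊆ H i := by
      rw [hH i, hH j]
      exact homothet_subset hCconv (hl j) (hl i) hle hci he.symm
    exact redundant (Ne.symm hij) hsub (hred i)
end

section
/- Let H = ⋂ᵢ₌₁ⁿ Hᵢ be a proper intersection of n ≥ 2 homothets of a strictly convex domain C in ℝ². Then for each index j, the boundary of Hⱼ meets the interior of Wⱼ = ⋂_{i≠j} Hᵢ, i.e., bd(Hⱼ) ∩ int(Wⱼ) ≠ ∅. -/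
open Pointwise
open scoped RealInnerProductSpace

theorem stmt9 (C : Set Plane) (hC : IsStrictConvexDomain C)
    (n : ℕ) (hn : 2 ≤ n) (x : Fin n → Plane) (l : Fin n → ℝ) (hl : ∀ i, 0 < l i)
    (H : Fin n → Set Plane) (hH : ∀ i, H i = x i +ᵥ l i • C)
    (hint : (interior (⋂ i, H i)).Nonempty)
    (hred : ∀ j : Fin n, (⋂ i, H i) ⊂ ⋂ i ∈ {i : Fin n | i ≠ j}, H i) :
    ∀ j : Fin n, (frontier (H j) ∩ interior (⋂ i ∈ {i : Fin n | i ≠ j}, H i)).Nonempty := by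
  intro j
  set W := ⋂ i ∈ {i : Fin n | i ≠ j}, H i with hW
  have hCc : IsCompact C := hC.1.1
  have hCv : Convex ℝ C := hC.1.2.1
  have hHconv : ∀ i, Convex ℝ (H i) := fun i => by
    rw [hH i]; exact (hCv.smul _).vadd _
  have hHclosed : ∀ i, IsClosed (H i) := fun i => by
    rw [hH i]
    exact ((hCc.smul (l i)).vadd (x i)).isClosed
  have hWconv : Convex ℝ W := convex_iInter₂ fun i _ => hHconv i
  obtain ⟨q, hq⟩ := hint
  obtain ⟨p, hpW, hpH⟩ := Set.exists_of_ssubset (hred j)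
  have hpHj : p ∉ H j := by
    intro hpj
    refine hpH (Set.mem_iInter.2 fun i => ?_)
    by_cases hi : i = j
    · exact hi ▸ hpj
    · exact Set.mem_iInter₂.1 hpW i hi
  have hqj : q ∈ interior (H j) := interior_mono (Set.iInter_subset _ j) hq
  have hqW : q ∈ interior W := interior_mono (hred j).1 hq
  have hseg : (segment ℝ q p ∩ frontier (H j)).Nonempty := by
    by_contra h
    rw [Set.not_nonempty_iff_eq_empty] at h
    have hsub : segment ℝ q p ⊆ interior (H j) ∪ (H j)ᶜ := by
      intro z hz
      by_cases hzH : z ∈ H j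
      · left
        have hnf : z ∉ frontier (H j) := fun hf =>
          Set.eq_empty_iff_forall_notMem.1 h z ⟨hz, hf⟩
        have hcl : z ∈ closure (H j) := subset_closure hzH
        rw [frontier, Set.mem_diff] at hnf
        push_neg at hnf
        exact hnf hcl
      · exact Or.inr hzH
    obtain ⟨z, hzs, hz1, hz2⟩ := (convex_segment q p).isPreconnected _ _ isOpen_interior
      (hHclosed j).isOpen_compl hsub ⟨q, left_mem_segment ℝ q p, hqj⟩
      ⟨p, right_mem_segment ℝ q p, hpHj⟩
    exact hz2 (interior_subset hz1)
  obtain ⟨z, hzs, hzf⟩ := hseg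
  have hzq : q ≠ z := by
    rintro rfl
    exact hzf.2 hqj
  have hzp : p ≠ z := by
    rintro rfl
    exact hpHj ((hHclosed j).closure_eq ▸ hzf.1)
  have hzo : z ∈ openSegment ℝ q p := mem_openSegment_of_ne_left_right hzq hzp hzs
  exact ⟨z, hzf, hWconv.openSegment_interior_closure_subset_interior hqW
    (subset_closure hpW) hzo⟩
end
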